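/- Let X be a real Banach space, A : X → Set X an accretive operator with zer A ≠ ∅, and for each γ > 0 let J_γ : X → X be a resolvent function of A. Let α ∈ [0,1), f : X → X an α-contraction, x ∈ X, (α_n) a sequence in [0,1], (λ_n) a sequence in (0,∞), (e_n) a sequence in X, and (x_n) the VAMe iteration. Suppose Φ : ℕ → ℕ is a rate of asymptotic regularity of (x_n), θ₂ is a rate of convergence of ‖e_n‖ towards 0, σ₃ is a rate of convergence of (α_n) towards 0, θ₁ is a Cauchy modulus of Σ_{n=0}^∞ ‖e_n‖, z ∈ zer A, and K_z ∈ ℕ, K_z ≥ 1, satisfies K_z ≥ max{‖x − z‖, ‖f(z) − z‖/(1 − α)} + ⌈Σ_{i=0}^{θ₁(0)} ‖e_i‖⌉ + 1. Define Ψ(k) = max{σ₃(6K_z(k+1) − 1), Φ(3k+2), θ₂(3k+2)}. Then Ψ is a rate of (J_{λ_n})-asymptotic regularity of (x_n): for all k ∈ ℕ and all n ≥ Ψ(k), ‖J_{λ_n} x_n − x_n‖ ≤ 1/(k+1). -/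

import Mathlib

/-- Rate of `(J_{λ_n})`-asymptotic regularity of the VAMe iteration. -/
theorem stmt_11 {X : Type*} [NormedAddCommGroup X] [NormedSpace ℝ X] [CompleteSpace X]
    (A : X → Set X)
    (hA : ∀ x y u v : X, u ∈ A x → v ∈ A y → ∀ γ : ℝ, 0 < γ →
      ‖x - y‖ ≤ ‖x - y + γ • (u - v)‖)
    (hzer : ∃ z : X, (0 : X) ∈ A z)
    (Jr : ℝ → X → X)
    (hJ : ∀ γ : ℝ, 0 < γ → ∀ x : X, γ⁻¹ • (x - Jr γ x) ∈ A (Jr γ x))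
    (α : ℝ) (hα0 : 0 ≤ α) (hα1 : α < 1)
    (f : X → X) (hf : ∀ x y : X, ‖f x - f y‖ ≤ α * ‖x - y‖)
    (x : X)
    (a : ℕ → ℝ) (ha : ∀ n, a n ∈ Set.Icc (0 : ℝ) 1)
    (lam : ℕ → ℝ) (hlam : ∀ n, 0 < lam n)
    (e : ℕ → X)
    (xs : ℕ → X) (hxs0 : xs 0 = x)
    (hxs : ∀ n : ℕ, xs (n + 1) = a n • f (xs n) + (1 - a n) • Jr (lam n) (xs n) + e n)
    -- Φ is a rate of asymptotic regularity of (xs n)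
    (Φ : ℕ → ℕ) (hΦ : ∀ k : ℕ, ∀ n, Φ k ≤ n → ‖xs (n + 1) - xs n‖ ≤ 1 / (k + 1))
    -- θ₂ is a rate of convergence of ‖e n‖ towards 0
    (θ₂ : ℕ → ℕ) (hθ₂ : ∀ k : ℕ, ∀ n, θ₂ k ≤ n → ‖e n‖ ≤ 1 / (k + 1))
    -- σ₃ is a rate of convergence of (a n) towards 0
    (σ₃ : ℕ → ℕ) (hσ₃ : ∀ k : ℕ, ∀ n, σ₃ k ≤ n → a n ≤ 1 / (k + 1))
    -- θ₁ is a Cauchy modulus of Σ ‖e n‖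
    (θ₁ : ℕ → ℕ)
    (hθ₁ : ∀ k : ℕ, ∀ n, θ₁ k ≤ n → ∀ p : ℕ,
      ∑ i ∈ Finset.Icc (n + 1) (n + p), ‖e i‖ ≤ 1 / (k + 1))
    (z : X) (hz : (0 : X) ∈ A z)
    (Kz : ℕ) (hKz1 : 1 ≤ Kz)
    (hKz : max ‖x - z‖ (‖f z - z‖ / (1 - α)) +
      (⌈∑ i ∈ Finset.range (θ₁ 0 + 1), ‖e i‖⌉₊ : ℝ) + 1 ≤ (Kz : ℝ))
    (Ψ : ℕ → ℕ)
    (hΨ : ∀ k : ℕ, Ψ k =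
      max (max (σ₃ (6 * Kz * (k + 1) - 1)) (Φ (3 * k + 2))) (θ₂ (3 * k + 2))) :
    ∀ k : ℕ, ∀ n, Ψ k ≤ n → ‖Jr (lam n) (xs n) - xs n‖ ≤ 1 / (k + 1) := by
  -- quasi-nonexpansiveness of resolvents at z
  have hJz : ∀ γ : ℝ, 0 < γ → ∀ y : X, ‖Jr γ y - z‖ ≤ ‖y - z‖ := by
    intro γ hγ y
    have h := hA (Jr γ y) z (γ⁻¹ • (y - Jr γ y)) 0 (hJ γ hγ y) hz γ hγ
    have heq : Jr γ y - z + γ • (γ⁻¹ • (y - Jr γ y) - 0) = y - z := by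
      rw [sub_zero, smul_smul, mul_inv_cancel₀ hγ.ne', one_smul]; abel
    rwa [heq] at h
  set M := max ‖x - z‖ (‖f z - z‖ / (1 - α)) with hMdef
  have hM0 : 0 ≤ M := le_trans (norm_nonneg _) (le_max_left _ _)
  have h1α : (0:ℝ) < 1 - α := by linarith
  have hfzM : ‖f z - z‖ ≤ (1 - α) * M := by
    have h := le_max_right ‖x - z‖ (‖f z - z‖ / (1 - α))
    rw [div_le_iff₀ h1α] at h
    linarith
  -- boundedness lemma
  have hbound : ∀ n, ‖xs n - z‖ ≤ M + ∑ i ∈ Finset.range n, ‖e i‖ := by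
    intro n; induction n with
    | zero =>
      simp only [Finset.range_zero, Finset.sum_empty, add_zero, hxs0]
      exact le_max_left _ _
    | succ n ih =>
      obtain ⟨h0, h1⟩ := ha n
      have hS : 0 ≤ ∑ i ∈ Finset.range n, ‖e i‖ :=
        Finset.sum_nonneg fun i _ => norm_nonneg _
      have hfx : ‖f (xs n) - z‖ ≤ α * ‖xs n - z‖ + ‖f z - z‖ := by
        calc ‖f (xs n) - z‖ ≤ ‖f (xs n) - f z‖ + ‖f z - z‖ :=
              norm_sub_le_norm_sub_add_norm_sub _ _ _
          _ ≤ α * ‖xs n - z‖ + ‖f z - z‖ := by linarith [hf (xs n) z]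
      have hJn := hJz (lam n) (hlam n) (xs n)
      have hstep : ‖xs (n+1) - z‖ ≤
          a n * ‖f (xs n) - z‖ + (1 - a n) * ‖Jr (lam n) (xs n) - z‖ + ‖e n‖ := by
        rw [hxs n]
        have heq : a n • f (xs n) + (1 - a n) • Jr (lam n) (xs n) + e n - z
            = (a n • (f (xs n) - z) + (1 - a n) • (Jr (lam n) (xs n) - z)) + e n := by
          module
        rw [heq]
        calc ‖(a n • (f (xs n) - z) + (1 - a n) • (Jr (lam n) (xs n) - z)) + e n‖
            ≤ ‖a n • (f (xs n) - z) + (1 - a n) • (Jr (lam n) (xs n) - z)‖ + ‖e n‖ :=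
              norm_add_le _ _
          _ ≤ ‖a n • (f (xs n) - z)‖ + ‖(1 - a n) • (Jr (lam n) (xs n) - z)‖ + ‖e n‖ := by
              linarith [norm_add_le (a n • (f (xs n) - z)) ((1 - a n) • (Jr (lam n) (xs n) - z))]
          _ = a n * ‖f (xs n) - z‖ + (1 - a n) * ‖Jr (lam n) (xs n) - z‖ + ‖e n‖ := by
              rw [norm_smul, norm_smul, Real.norm_eq_abs, Real.norm_eq_abs,
                abs_of_nonneg h0, abs_of_nonneg (by linarith : (0:ℝ) ≤ 1 - a n)]
      rw [Finset.sum_range_succ]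
      have h2 : a n * ‖f (xs n) - z‖ ≤ a n * (α * ‖xs n - z‖ + (1 - α) * M) :=
        mul_le_mul_of_nonneg_left (by linarith) h0
      have h3 : (1 - a n) * ‖Jr (lam n) (xs n) - z‖ ≤ (1 - a n) * ‖xs n - z‖ :=
        mul_le_mul_of_nonneg_left hJn (by linarith)
      nlinarith [mul_nonneg (mul_nonneg h0 h1α.le) hS,
        mul_nonneg (by nlinarith : (0:ℝ) ≤ 1 - a n * (1 - α))
          (by linarith : (0:ℝ) ≤ M + (∑ i ∈ Finset.range n, ‖e i‖) - ‖xs n - z‖)]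
  -- the iterates are bounded by Kz
  have hceil : (0:ℝ) ≤ (⌈∑ i ∈ Finset.range (θ₁ 0 + 1), ‖e i‖⌉₊ : ℝ) := Nat.cast_nonneg _
  have hKbound : ∀ n, ‖xs n - z‖ ≤ (Kz : ℝ) := by
    intro n
    have hS0 : ∑ i ∈ Finset.range n, ‖e i‖ ≤ (∑ i ∈ Finset.range (θ₁ 0 + 1), ‖e i‖) + 1 := by
      rcases le_or_gt n (θ₁ 0 + 1) with h | h
      · have hsub := Finset.sum_le_sum_of_subset_of_nonneg (Finset.range_subset_range.2 h)
          (fun i _ _ => norm_nonneg (e i))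
        linarith
      · obtain ⟨p, rfl⟩ : ∃ p, n = (θ₁ 0 + 1) + p := ⟨n - (θ₁ 0 + 1), by omega⟩
        have hsplit : ∑ i ∈ Finset.range ((θ₁ 0 + 1) + p), ‖e i‖
            = (∑ i ∈ Finset.range (θ₁ 0 + 1), ‖e i‖)
              + ∑ i ∈ Finset.Ico (θ₁ 0 + 1) ((θ₁ 0 + 1) + p), ‖e i‖ := by
          rw [Finset.range_eq_Ico, Finset.range_eq_Ico]
          exact (Finset.sum_Ico_consecutive (fun i => ‖e i‖) (Nat.zero_le _) (Nat.le_add_right _ _)).symm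
        have htail := hθ₁ 0 (θ₁ 0) le_rfl p
        have hIco : Finset.Ico (θ₁ 0 + 1) ((θ₁ 0 + 1) + p) = Finset.Icc (θ₁ 0 + 1) (θ₁ 0 + p) := by
          ext i; simp only [Finset.mem_Ico, Finset.mem_Icc]; omega
        rw [hsplit, hIco]
        norm_num at htail
        linarith
    have hle := Nat.le_ceil (∑ i ∈ Finset.range (θ₁ 0 + 1), ‖e i‖)
    have := hbound n
    linarith
  have hMK : M ≤ (Kz : ℝ) - 1 := by linarith
  -- main argument
  intro k n hn
  rw [hΨ k] at hn
  have hn1 : σ₃ (6 * Kz * (k + 1) - 1) ≤ n :=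
    le_trans (le_trans (le_max_left _ _) (le_max_left _ _)) hn
  have hn2 : Φ (3 * k + 2) ≤ n :=
    le_trans (le_trans (le_max_right _ _) (le_max_left _ _)) hn
  have hn3 : θ₂ (3 * k + 2) ≤ n := le_trans (le_max_right _ _) hn
  have hK0 : (0:ℝ) < Kz := by exact_mod_cast Nat.lt_of_lt_of_le Nat.zero_lt_one hKz1
  have hk0 : (0:ℝ) < (k:ℝ) + 1 := by positivity
  -- convert the rates
  have hσ : a n ≤ 1 / (6 * (Kz:ℝ) * ((k:ℝ) + 1)) := by
    have h := hσ₃ _ n hn1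
    have h6 : 1 ≤ 6 * Kz * (k + 1) :=
      Nat.one_le_iff_ne_zero.2 (by positivity)
    have hcast : ((6 * Kz * (k + 1) - 1 : ℕ) : ℝ) + 1 = 6 * (Kz:ℝ) * ((k:ℝ) + 1) := by
      rw [Nat.cast_sub h6]; push_cast; ring
    rwa [hcast] at h
  have hΦn : ‖xs (n + 1) - xs n‖ ≤ 1 / (3 * ((k:ℝ) + 1)) := by
    have h := hΦ _ n hn2
    have : ((3 * k + 2 : ℕ) : ℝ) + 1 = 3 * ((k:ℝ) + 1) := by push_cast; ring
    rwa [this] at h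
  have hθn : ‖e n‖ ≤ 1 / (3 * ((k:ℝ) + 1)) := by
    have h := hθ₂ _ n hn3
    have : ((3 * k + 2 : ℕ) : ℝ) + 1 = 3 * ((k:ℝ) + 1) := by push_cast; ring
    rwa [this] at h
  obtain ⟨h0, h1⟩ := ha n
  have hJn := hJz (lam n) (hlam n) (xs n)
  have hKb := hKbound n
  -- bound on ‖f x_n - J x_n‖
  have hfJ : ‖f (xs n) - Jr (lam n) (xs n)‖ ≤ 2 * (Kz : ℝ) := by
    have t1 : ‖f (xs n) - Jr (lam n) (xs n)‖
        ≤ ‖f (xs n) - f z‖ + ‖f z - z‖ + ‖z - Jr (lam n) (xs n)‖ := by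
      have := dist_triangle4 (f (xs n)) (f z) z (Jr (lam n) (xs n))
      simpa [dist_eq_norm] using this
    have t2 : ‖f (xs n) - f z‖ ≤ α * ‖xs n - z‖ := hf (xs n) z
    have t3 : ‖z - Jr (lam n) (xs n)‖ = ‖Jr (lam n) (xs n) - z‖ := norm_sub_rev _ _
    nlinarith [mul_le_mul_of_nonneg_left hKb hα0,
      mul_le_mul_of_nonneg_left hMK h1α.le]
  -- decomposition
  have hdecomp : xs (n + 1) - Jr (lam n) (xs n) = a n • (f (xs n) - Jr (lam n) (xs n)) + e n := by
    rw [hxs n]; module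
  have haB : a n * ‖f (xs n) - Jr (lam n) (xs n)‖ ≤ 1 / (3 * ((k:ℝ) + 1)) := by
    have hm : a n * ‖f (xs n) - Jr (lam n) (xs n)‖
        ≤ (1 / (6 * (Kz:ℝ) * ((k:ℝ) + 1))) * (2 * Kz) :=
      mul_le_mul hσ hfJ (norm_nonneg _) (by positivity)
    have he : (1 / (6 * (Kz:ℝ) * ((k:ℝ) + 1))) * (2 * Kz) = 1 / (3 * ((k:ℝ) + 1)) := by
      field_simp; ring
    linarith [he ▸ hm]
  have hnrm : ‖xs (n + 1) - Jr (lam n) (xs n)‖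
      ≤ a n * ‖f (xs n) - Jr (lam n) (xs n)‖ + ‖e n‖ := by
    rw [hdecomp]
    calc ‖a n • (f (xs n) - Jr (lam n) (xs n)) + e n‖
        ≤ ‖a n • (f (xs n) - Jr (lam n) (xs n))‖ + ‖e n‖ := norm_add_le _ _
      _ = a n * ‖f (xs n) - Jr (lam n) (xs n)‖ + ‖e n‖ := by
          rw [norm_smul, Real.norm_eq_abs, abs_of_nonneg h0]
  have tri : ‖Jr (lam n) (xs n) - xs n‖
      ≤ ‖xs (n + 1) - Jr (lam n) (xs n)‖ + ‖xs (n + 1) - xs n‖ := by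
    have := norm_sub_le_norm_sub_add_norm_sub (Jr (lam n) (xs n)) (xs (n + 1)) (xs n)
    rw [norm_sub_rev (Jr (lam n) (xs n)) (xs (n + 1))] at this
    exact this
  have hfin : 3 * (1 / (3 * ((k:ℝ) + 1))) = 1 / ((k:ℝ) + 1) := by
    rw [mul_one_div, div_eq_div_iff (by positivity : (3:ℝ) * ((k:ℝ) + 1) ≠ 0) hk0.ne']
    ring
  linarith
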